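/- arXiv:2308.06655 — 4 statements merged into one kernel-verified Lean document; each statement's English description precedes it below -/
import Mathlib

section
/- Let λ ∈ ℂ with Re(λ) ≥ 2. Then the eigenvalue problem (1 - φ²) v' + φ φ' v = λ v, with φ(x) = e^{-|x|}, has no nonzero solution v ∈ L²(ℝ) (with (1-φ²)v' ∈ L²(ℝ)). -/
open MeasureTheory Real Set Filter

/-- `φ(x) = e^{-|x|}`. -/
noncomputable def phi (x : ℝ) : ℝ := Real.exp (-|x|)

/-- `φ'(x) = -sgn(x) e^{-|x|}` (a.e. derivative). -/
noncomputable def phi' (x : ℝ) : ℝ := -Real.sign x * Real.exp (-|x|)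

private lemma hasDerivAt_normSq_comp {v : ℝ → ℂ} {w : ℂ} {x : ℝ}
    (h : HasDerivAt v w x) :
    HasDerivAt (fun y => Complex.normSq (v y)) (2 * ((starRingEnd ℂ) (v x) * w).re) x := by
  have hre : HasDerivAt (fun y => (v y).re) w.re x :=
    Complex.reCLM.hasFDerivAt.comp_hasDerivAt x h
  have him : HasDerivAt (fun y => (v y).im) w.im x :=
    Complex.imCLM.hasFDerivAt.comp_hasDerivAt x h
  have h2 := (hre.mul hre).add (him.mul him)
  have hfun : (fun y => Complex.normSq (v y))
      = fun y => (v y).re * (v y).re + (v y).im * (v y).im := by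
    funext y; simp [Complex.normSq_apply]
  rw [hfun]
  refine h2.congr_deriv ?_
  simp [Complex.mul_re, Complex.conj_re, Complex.conj_im]
  ring

private lemma conj_mul_scaled (c z : ℂ) :
    ((starRingEnd ℂ) z * (c * z)).re = c.re * Complex.normSq z := by
  have h : (starRingEnd ℂ) z * (c * z) = c * ((Complex.normSq z : ℝ) : ℂ) := by
    rw [Complex.normSq_eq_conj_mul_self]; ring
  rw [h]
  simp [Complex.mul_re]

/-- For `Re λ ≥ 2`, the eigenvalue problem `(1-φ²)v' + φφ'v = λ v` has no nonzero solution
`v ∈ L²(ℝ)` with `(1-φ²)v' ∈ L²(ℝ)`. -/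
theorem no_eigenvalue_re_ge_two
    (lam : ℂ) (hlam : 2 ≤ lam.re) (v dv : ℝ → ℂ)
    (hderiv : ∀ ξ : ℝ, ξ ≠ 0 → HasDerivAt v (dv ξ) ξ)
    (heq : ∀ ξ : ℝ, ξ ≠ 0 →
      ((1 - phi ξ ^ 2 : ℝ) : ℂ) * dv ξ + ((phi ξ * phi' ξ : ℝ) : ℂ) * v ξ = lam * v ξ)
    (hv : MeasureTheory.MemLp v 2 (volume : Measure ℝ))
    (hdv : MeasureTheory.MemLp (fun ξ => ((1 - phi ξ ^ 2 : ℝ) : ℂ) * dv ξ) 2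
      (volume : Measure ℝ)) :
    ∀ ξ : ℝ, ξ ≠ 0 → v ξ = 0 := by
  set g : ℝ → ℝ := fun x => Complex.normSq (v x) with hg_def
  -- integrability of g
  have hg_int : Integrable g (volume : Measure ℝ) := by
    have h2 := hv.integrable_norm_rpow two_ne_zero ENNReal.ofNat_ne_top
    simp only [ENNReal.toReal_ofNat] at h2
    have : g = fun x => ‖v x‖ ^ (2 : ℝ) := by
      funext x
      rw [Real.rpow_two, hg_def, Complex.sq_norm]
    rw [this]
    exact h2
  have hgnn : ∀ x, 0 ≤ g x := fun x => Complex.normSq_nonneg _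
  ---- Positive side
  have key_pos : ∀ ξ : ℝ, 0 < ξ →
      dv ξ = ((lam + (Real.exp (-(2 * ξ)) : ℝ)) / ((1 - Real.exp (-(2 * ξ)) : ℝ))) * v ξ := by
    intro ξ hξ
    have h1 := heq ξ (ne_of_gt hξ)
    have habs : |ξ| = ξ := abs_of_pos hξ
    have hphi2 : phi ξ ^ 2 = Real.exp (-(2 * ξ)) := by
      rw [phi, habs, sq, ← Real.exp_add]; ring_nf
    have hphiphi' : phi ξ * phi' ξ = -Real.exp (-(2 * ξ)) := by
      have he : Real.exp (-ξ) * Real.exp (-ξ) = Real.exp (-(2 * ξ)) := by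
        rw [← Real.exp_add]; ring_nf
      rw [phi, phi', habs, Real.sign_of_pos hξ]
      linear_combination -he
    rw [hphi2, hphiphi'] at h1
    have he1 : Real.exp (-(2 * ξ)) < 1 := Real.exp_lt_one_iff.mpr (by linarith)
    have hd : ((1 - Real.exp (-(2 * ξ)) : ℝ) : ℂ) ≠ 0 := by
      simp only [ne_eq, Complex.ofReal_eq_zero]
      linarith
    rw [div_mul_eq_mul_div, eq_div_iff hd]
    push_cast at h1 ⊢
    linear_combination h1
  have hg_deriv_pos : ∀ ξ : ℝ, 0 < ξ → HasDerivAt g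
      (2 * ((lam.re + Real.exp (-(2 * ξ))) / (1 - Real.exp (-(2 * ξ)))) * g ξ) ξ := by
    intro ξ hξ
    have h := hasDerivAt_normSq_comp (hderiv ξ (ne_of_gt hξ))
    rw [key_pos ξ hξ] at h
    convert h using 1
    rw [conj_mul_scaled]
    have : ((lam + ((Real.exp (-(2 * ξ)) : ℝ) : ℂ)) / ((1 - Real.exp (-(2 * ξ)) : ℝ) : ℂ)).re
        = (lam.re + Real.exp (-(2 * ξ))) / (1 - Real.exp (-(2 * ξ))) := by
      rw [Complex.div_ofReal_re]
      simp [Complex.add_re, Complex.sub_re, Complex.ofReal_re, -Complex.ofReal_exp]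
    rw [this, hg_def]
    ring
  have hg_mono : MonotoneOn g (Ioi (0 : ℝ)) := by
    apply monotoneOn_of_deriv_nonneg (convex_Ioi 0)
    · intro x hx
      exact (hg_deriv_pos x hx).continuousAt.continuousWithinAt
    · rw [interior_Ioi]
      intro x hx
      exact (hg_deriv_pos x hx).differentiableAt.differentiableWithinAt
    · intro x hx
      rw [interior_Ioi] at hx
      rw [(hg_deriv_pos x hx).deriv]
      have he1 : Real.exp (-(2 * x)) < 1 := Real.exp_lt_one_iff.mpr (by linarith [hx.out])
      have hepos : (0 : ℝ) < Real.exp (-(2 * x)) := Real.exp_pos _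
      have : 0 ≤ (lam.re + Real.exp (-(2 * x))) / (1 - Real.exp (-(2 * x))) := by
        apply div_nonneg (by linarith) (by linarith)
      have := mul_nonneg (mul_nonneg (by norm_num : (0:ℝ) ≤ 2) this) (hgnn x)
      linarith
  have hpos : ∀ ξ : ℝ, 0 < ξ → v ξ = 0 := by
    intro ξ₀ hξ₀
    by_contra hv0
    have hc : 0 < g ξ₀ := Complex.normSq_pos.mpr hv0
    have hint : IntegrableOn g (Ici ξ₀) volume := hg_int.integrableOn
    have hconst : Integrable (fun _ : ℝ => g ξ₀) (volume.restrict (Ici ξ₀)) := by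
      apply Integrable.mono' hint aestronglyMeasurable_const
      rw [ae_restrict_iff' measurableSet_Ici]
      refine ae_of_all _ fun x hx => ?_
      rw [Real.norm_eq_abs, abs_of_pos hc]
      exact hg_mono hξ₀ (lt_of_lt_of_le hξ₀ hx) hx
    rw [integrable_const_iff] at hconst
    rcases hconst with h | h
    · exact absurd h (ne_of_gt hc)
    · rw [isFiniteMeasure_restrict, ← lt_top_iff_ne_top, Real.volume_Ici] at h
      exact absurd h (lt_irrefl _)
  ---- Negative side
  have key_neg : ∀ ξ : ℝ, ξ < 0 →
      dv ξ = ((lam - (Real.exp (2 * ξ) : ℝ)) / ((1 - Real.exp (2 * ξ) : ℝ))) * v ξ := by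
    intro ξ hξ
    have h1 := heq ξ (ne_of_lt hξ)
    have habs : |ξ| = -ξ := abs_of_neg hξ
    have hphi2 : phi ξ ^ 2 = Real.exp (2 * ξ) := by
      rw [phi, habs, sq, ← Real.exp_add]; ring_nf
    have hphiphi' : phi ξ * phi' ξ = Real.exp (2 * ξ) := by
      have he : Real.exp ξ * Real.exp ξ = Real.exp (2 * ξ) := by
        rw [← Real.exp_add]; ring_nf
      rw [phi, phi', habs, Real.sign_of_neg hξ]
      simp only [neg_neg]
      linear_combination he
    rw [hphi2, hphiphi'] at h1
    have he1 : Real.exp (2 * ξ) < 1 := Real.exp_lt_one_iff.mpr (by linarith)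
    have hd : ((1 - Real.exp (2 * ξ) : ℝ) : ℂ) ≠ 0 := by
      simp only [ne_eq, Complex.ofReal_eq_zero]
      linarith
    rw [div_mul_eq_mul_div, eq_div_iff hd]
    push_cast at h1 ⊢
    linear_combination h1
  set F : ℝ → ℝ := fun x => g x * (1 - Real.exp (2 * x)) with hF_def
  have hF_deriv : ∀ ξ : ℝ, ξ < 0 →
      HasDerivAt F (2 * (lam.re - 2 * Real.exp (2 * ξ)) * g ξ) ξ := by
    intro ξ hξ
    have hgd : HasDerivAt g
        (2 * ((lam.re - Real.exp (2 * ξ)) / (1 - Real.exp (2 * ξ))) * g ξ) ξ := by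
      have h := hasDerivAt_normSq_comp (hderiv ξ (ne_of_lt hξ))
      rw [key_neg ξ hξ] at h
      convert h using 1
      rw [conj_mul_scaled]
      have : ((lam - ((Real.exp (2 * ξ) : ℝ) : ℂ)) / ((1 - Real.exp (2 * ξ) : ℝ) : ℂ)).re
          = (lam.re - Real.exp (2 * ξ)) / (1 - Real.exp (2 * ξ)) := by
        rw [Complex.div_ofReal_re, Complex.sub_re, Complex.ofReal_re]
      rw [this, hg_def]
      ring
    have hu : HasDerivAt (fun x : ℝ => 1 - Real.exp (2 * x)) (-(2 * Real.exp (2 * ξ))) ξ := by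
      have h1 : HasDerivAt (fun x : ℝ => 2 * x) 2 ξ := by
        simpa using (hasDerivAt_id ξ).const_mul (2 : ℝ)
      have h2 := (Real.hasDerivAt_exp (2 * ξ)).comp ξ h1
      have := (hasDerivAt_const ξ (1 : ℝ)).sub h2
      refine this.congr_deriv ?_
      ring
    have := hgd.mul hu
    refine this.congr_deriv ?_
    have he1 : Real.exp (2 * ξ) < 1 := Real.exp_lt_one_iff.mpr (by linarith)
    have hne : (1 : ℝ) - Real.exp (2 * ξ) ≠ 0 := by linarith
    field_simp
    ring
  have hF_mono : MonotoneOn F (Iio (0 : ℝ)) := by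
    apply monotoneOn_of_deriv_nonneg (convex_Iio 0)
    · intro x hx
      exact (hF_deriv x hx).continuousAt.continuousWithinAt
    · rw [interior_Iio]
      intro x hx
      exact (hF_deriv x hx).differentiableAt.differentiableWithinAt
    · intro x hx
      rw [interior_Iio] at hx
      rw [(hF_deriv x hx).deriv]
      have he1 : Real.exp (2 * x) < 1 := Real.exp_lt_one_iff.mpr (by linarith [hx.out])
      have := mul_nonneg (mul_nonneg (by norm_num : (0:ℝ) ≤ 2)
        (by linarith : (0:ℝ) ≤ lam.re - 2 * Real.exp (2 * x))) (hgnn x)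
      linarith
  have hneg : ∀ ξ : ℝ, ξ < 0 → v ξ = 0 := by
    intro ξ₀ hξ₀
    by_contra hv0
    have hg0 : 0 < g ξ₀ := Complex.normSq_pos.mpr hv0
    have he0 : Real.exp (2 * ξ₀) < 1 := Real.exp_lt_one_iff.mpr (by linarith)
    have hC : 0 < F ξ₀ := mul_pos hg0 (by linarith)
    set C := F ξ₀ with hC_def
    have hbound : ∀ x ∈ Ioo ξ₀ (0 : ℝ), C / (-(2 * x)) ≤ g x := by
      intro x hx
      have hx0 : x < 0 := hx.2
      have hux : 0 < 1 - Real.exp (2 * x) := by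
        have := Real.exp_lt_one_iff.mpr (by linarith : 2 * x < 0)
        linarith
      have h1 : C ≤ F x := hF_mono hξ₀ hx0 hx.1.le
      have h2 : 1 - Real.exp (2 * x) ≤ -(2 * x) := by
        have := Real.add_one_le_exp (2 * x)
        linarith
      have h3 : C / (-(2 * x)) ≤ C / (1 - Real.exp (2 * x)) :=
        div_le_div_of_nonneg_left hC.le hux h2
      have h4 : C / (1 - Real.exp (2 * x)) ≤ F x / (1 - Real.exp (2 * x)) :=
        div_le_div_of_nonneg_right h1 hux.le
      have h5 : F x / (1 - Real.exp (2 * x)) = g x := by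
        rw [hF_def]
        field_simp
      linarith
    have hint : IntegrableOn g (Ioo ξ₀ 0) volume := hg_int.integrableOn
    have hinv : IntegrableOn (fun x => C / (-(2 * x))) (Ioo ξ₀ 0) volume := by
      apply Integrable.mono' hint
      · exact (Measurable.div measurable_const
          ((measurable_id.const_mul (2 : ℝ)).neg)).aestronglyMeasurable
      · rw [ae_restrict_iff' measurableSet_Ioo]
        refine ae_of_all _ fun x hx => ?_
        rw [Real.norm_eq_abs, abs_of_nonneg]
        · exact hbound x hx
        · apply div_nonneg hC.le
          have := hx.2
          linarith
    have hinv2 : IntegrableOn (fun x : ℝ => x⁻¹) (Ioo ξ₀ 0) volume := by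
      have hfe : (fun x : ℝ => x⁻¹) = fun x => (-2 / C) * (C / (-(2 * x))) := by
        funext x
        rcases eq_or_ne x 0 with rfl | hx
        · simp
        · field_simp
      rw [hfe]
      exact hinv.const_mul _
    have hiv : IntervalIntegrable (fun x : ℝ => x⁻¹) volume ξ₀ 0 := by
      rw [intervalIntegrable_iff, uIoc_of_le hξ₀.le,
        integrableOn_Ioc_iff_integrableOn_Ioo]
      exact hinv2
    rw [intervalIntegrable_inv_iff] at hiv
    rcases hiv with h | h
    · exact absurd h (ne_of_lt hξ₀)
    · exact h right_mem_uIcc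
  intro ξ hξ
  rcases lt_or_gt_of_ne hξ with h | h
  · exact hneg ξ h
  · exact hpos ξ (by exact_mod_cast h)
end

section
/- Let λ ∈ ℂ with Re(λ) > 0. Then the adjoint eigenvalue problem −(1 − φ²) v' + 3 φ φ' v = λ v, with φ(x) = e^{-|x|}, has no nonzero solution in L²(ℝ). -/
open MeasureTheory Real Set Filter

set_option maxHeartbeats 1000000

/-- A function with vanishing derivative on a convex set is constant there. -/
lemma aux_const_on {f : ℝ → ℂ} {S : Set ℝ} (hS : Convex ℝ S)
    (hf : ∀ x ∈ S, HasDerivAt f 0 x) {x y : ℝ} (hx : x ∈ S) (hy : y ∈ S) : f x = f y := by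
  have h := hS.norm_image_sub_le_of_norm_hasDerivWithin_le
    (f' := fun _ => (0:ℂ)) (C := 0) (fun z hz => (hf z hz).hasDerivWithinAt)
    (fun z hz => by simp) hx hy
  rw [show (0:ℝ) * ‖y - x‖ = 0 by ring] at h
  have := le_antisymm h (norm_nonneg _)
  rw [norm_eq_zero, sub_eq_zero] at this
  exact this.symm

/-- For `Re λ > 0`, the adjoint eigenvalue problem `-(1-φ²)v' + 3φφ'v = λ v` has no nonzero
solution in `L²(ℝ)`. -/
theorem adjoint_no_point_spectrum
    (lam : ℂ) (hlam : 0 < lam.re) (v dv : ℝ → ℂ)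
    (hderiv : ∀ ξ : ℝ, ξ ≠ 0 → HasDerivAt v (dv ξ) ξ)
    (heq : ∀ ξ : ℝ, ξ ≠ 0 →
      -(((1 - phi ξ ^ 2 : ℝ) : ℂ) * dv ξ) + 3 * ((phi ξ * phi' ξ : ℝ) : ℂ) * v ξ = lam * v ξ)
    (hv : MeasureTheory.MemLp v 2 (volume : Measure ℝ)) :
    ∀ ξ : ℝ, ξ ≠ 0 → v ξ = 0 := by
  intro ξ₀ hξ₀
  by_contra hv0
  have hInt : Integrable (fun x => ‖v x‖ ^ (2:ℝ)) (volume : Measure ℝ) := by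
    simpa using hv.integrable_norm_rpow (by norm_num) (by norm_num)
  rcases hξ₀.lt_or_gt with hneg | hpos
  · -- Case ξ₀ < 0 : explicit solution grows at -∞.
    set H : ℝ → ℂ := fun ξ => lam * (ξ:ℂ)
      + ((3:ℂ)-lam) * ((Real.log (1 - Real.exp ξ ^ 2) / 2 : ℝ) : ℂ) with hHdef
    have hg0 : ∀ ξ ∈ Iio (0:ℝ), HasDerivAt (fun ξ => v ξ * Complex.exp (H ξ)) 0 ξ := by
      intro ξ hξ
      have hξ' : ξ < 0 := hξ
      have hE : Real.exp ξ < 1 := Real.exp_lt_one_iff.mpr hξ'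
      have hEpos : 0 < Real.exp ξ := Real.exp_pos _
      have hu : 0 < 1 - Real.exp ξ ^ 2 := by nlinarith
      have h0 : HasDerivAt (fun ξ : ℝ => Real.exp ξ) (Real.exp ξ) ξ := Real.hasDerivAt_exp ξ
      have h1 : HasDerivAt (fun ξ : ℝ => 1 - Real.exp ξ ^ 2) (-(2 * Real.exp ξ ^ 2)) ξ := by
        have : HasDerivAt (fun ξ : ℝ => 1 - Real.exp ξ ^ 2) _ ξ := (h0.pow 2).const_sub 1
        convert this using 1; ring
      have h2 := h1.log (ne_of_gt hu)
      have h3 := ((h2.div_const 2).ofReal_comp).const_mul ((3:ℂ)-lam)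
      have h4 : HasDerivAt (fun ξ : ℝ => lam * (ξ:ℂ)) lam ξ := by
        simpa using ((hasDerivAt_id ξ).ofReal_comp).const_mul lam
      have hH : HasDerivAt H (lam + ((3:ℂ)-lam) * (((-(2 * Real.exp ξ ^ 2) / (1 - Real.exp ξ ^ 2)) / 2 : ℝ) : ℂ)) ξ := by
        convert h4.add h3 using 1
        all_goals rfl
      have hD := (hderiv ξ (ne_of_lt hξ')).mul hH.cexp
      have hzero : dv ξ * Complex.exp (H ξ) + v ξ * (Complex.exp (H ξ)
          * (lam + ((3:ℂ)-lam) * (((-(2 * Real.exp ξ ^ 2) / (1 - Real.exp ξ ^ 2)) / 2 : ℝ) : ℂ))) = 0 := by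
        have heq' := heq ξ (ne_of_lt hξ')
        have huC : ((1 - Real.exp ξ ^ 2 : ℝ) : ℂ) ≠ 0 := by exact_mod_cast ne_of_gt hu
        simp only [phi, phi', Real.sign_of_neg hξ', abs_of_neg hξ', neg_neg] at heq'
        push_cast at heq' huC ⊢
        set q : ℂ := Complex.exp (ξ:ℂ) with hqdef
        set X := Complex.exp (H ξ)
        have hkey : (1 - q^2) * dv ξ = (3*q^2 - lam) * v ξ := by linear_combination -heq'
        rw [show dv ξ * X + v ξ * (X * (lam + (3-lam) * (-(2 * q^2) / (1 - q^2) / 2)))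
            = X * ((1-q^2) * dv ξ + v ξ * (lam * (1-q^2) - (3-lam) * q^2)) / (1-q^2) by
              field_simp; ring]
        rw [hkey]
        field_simp
        ring
      rw [hzero] at hD
      exact hD
    have hconst : ∀ ξ ∈ Iio (0:ℝ), v ξ * Complex.exp (H ξ) = v ξ₀ * Complex.exp (H ξ₀) :=
      fun ξ hξ => aux_const_on (convex_Iio 0) hg0 hξ hneg
    set K : ℝ := ‖v ξ₀ * Complex.exp (H ξ₀)‖ with hKdef
    have hK : 0 < K :=
      norm_pos_iff.mpr (mul_ne_zero hv0 (Complex.exp_ne_zero _))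
    -- uniform positive lower bound for ‖v‖ on Iio ξ₀
    have hu₀ : 0 < 1 - Real.exp ξ₀ ^ 2 := by
      have hE : Real.exp ξ₀ < 1 := Real.exp_lt_one_iff.mpr hneg
      have : 0 < Real.exp ξ₀ := Real.exp_pos _
      nlinarith
    set L : ℝ := -Real.log (1 - Real.exp ξ₀ ^ 2) with hLdef
    have hL : 0 ≤ L := by
      simp only [hLdef, neg_nonneg]
      exact Real.log_nonpos (by positivity) (by nlinarith)
    set M : ℝ := |3 - lam.re| * L / 2 with hMdef
    set m : ℝ := Real.exp (-M) with hmdef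
    have hlow : ∀ ξ ∈ Iio ξ₀, (K * m) ^ 2 ≤ ‖v ξ‖ ^ (2:ℝ) := by
      intro ξ hξ
      have hξ' : ξ < ξ₀ := hξ
      have hξneg : ξ < 0 := lt_trans hξ' hneg
      have hE : Real.exp ξ < 1 := Real.exp_lt_one_iff.mpr hξneg
      have hEpos : 0 < Real.exp ξ := Real.exp_pos _
      have hu : 0 < 1 - Real.exp ξ ^ 2 := by nlinarith
      have hvξ : v ξ = (v ξ₀ * Complex.exp (H ξ₀)) * Complex.exp (-(H ξ)) := by
        have h := hconst ξ hξneg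
        rw [← h, Complex.exp_neg, mul_assoc, mul_inv_cancel₀ (Complex.exp_ne_zero _), mul_one]
      have hnorm : ‖v ξ‖ = K * Real.exp (-(H ξ).re) := by
        rw [hvξ, norm_mul, Complex.norm_exp, Complex.neg_re]
      have hre : (H ξ).re = lam.re * ξ + (3 - lam.re) * (Real.log (1 - Real.exp ξ ^ 2) / 2) := by
        simp [hHdef, Complex.add_re, Complex.mul_re, Complex.ofReal_re, Complex.ofReal_im,
          Complex.sub_re, Complex.sub_im]
      -- bound: -(H ξ).re ≥ -M
      have hloglb : Real.log (1 - Real.exp ξ₀ ^ 2) ≤ Real.log (1 - Real.exp ξ ^ 2) := by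
        apply Real.log_le_log hu₀
        have : Real.exp ξ ≤ Real.exp ξ₀ := Real.exp_le_exp.mpr (le_of_lt hξ')
        nlinarith
      have hlogub : Real.log (1 - Real.exp ξ ^ 2) ≤ 0 :=
        Real.log_nonpos (by positivity) (by nlinarith)
      have habs : |(3 - lam.re) * (Real.log (1 - Real.exp ξ ^ 2) / 2)| ≤ M := by
        rw [abs_mul, hMdef]
        have h1 : |Real.log (1 - Real.exp ξ ^ 2) / 2| ≤ L / 2 := by
          rw [abs_div]
          have : |Real.log (1 - Real.exp ξ ^ 2)| ≤ L := by
            rw [abs_of_nonpos hlogub]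
            linarith
          simp only [abs_two]
          linarith
        calc |3 - lam.re| * |Real.log (1 - Real.exp ξ ^ 2) / 2|
            ≤ |3 - lam.re| * (L / 2) := by
              exact mul_le_mul_of_nonneg_left h1 (abs_nonneg _)
          _ = |3 - lam.re| * L / 2 := by ring
      have hHub : (H ξ).re ≤ M := by
        rw [hre]
        have h1 : lam.re * ξ ≤ 0 := mul_nonpos_of_nonneg_of_nonpos (le_of_lt hlam) (le_of_lt hξneg)
        have h2 : (3 - lam.re) * (Real.log (1 - Real.exp ξ ^ 2) / 2) ≤ M :=
          le_trans (le_abs_self _) habs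
        linarith
      have hexp : m ≤ Real.exp (-(H ξ).re) := by
        rw [hmdef]
        exact Real.exp_le_exp.mpr (by linarith)
      have h1 : K * m ≤ ‖v ξ‖ := by
        rw [hnorm]
        exact mul_le_mul_of_nonneg_left hexp (le_of_lt hK)
      have h2 : (0:ℝ) ≤ K * m := by positivity
      rw [show ((2:ℝ)) = ((2:ℕ):ℝ) by norm_num, Real.rpow_natCast]
      exact pow_le_pow_left₀ h2 h1 2
    -- contradiction: constant positive function integrable on a set of infinite measure
    have hIntOn : IntegrableOn (fun x => ‖v x‖ ^ (2:ℝ)) (Iio ξ₀) volume := hInt.integrableOn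
    have hconst_int : Integrable (fun _ : ℝ => (K * m) ^ 2)
        ((volume : Measure ℝ).restrict (Iio ξ₀)) := by
      apply hIntOn.mono' aestronglyMeasurable_const
      rw [ae_restrict_iff' measurableSet_Iio]
      filter_upwards with x hx
      rw [Real.norm_eq_abs, abs_of_nonneg (by positivity)]
      exact hlow x hx
    rw [integrable_const_iff] at hconst_int
    rcases hconst_int with h | h
    · have : (0:ℝ) < (K * m) ^ 2 := by positivity
      rw [h] at this; exact lt_irrefl 0 this
    · have h := h.measure_univ_lt_top
      rw [Measure.restrict_apply_univ, Real.volume_Iio] at h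
      exact (lt_irrefl _) h
  · -- Case ξ₀ > 0 : explicit solution blows up like ξ^{-3/2} at 0⁺.
    set H : ℝ → ℂ := fun ξ => lam * (ξ:ℂ)
      + ((3:ℂ)+lam) * ((Real.log (1 - Real.exp (-ξ) ^ 2) / 2 : ℝ) : ℂ) with hHdef
    have hg0 : ∀ ξ ∈ Ioi (0:ℝ), HasDerivAt (fun ξ => v ξ * Complex.exp (H ξ)) 0 ξ := by
      intro ξ hξ
      have hξ' : (0:ℝ) < ξ := hξ
      have hE : Real.exp (-ξ) < 1 := Real.exp_lt_one_iff.mpr (by linarith)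
      have hEpos : 0 < Real.exp (-ξ) := Real.exp_pos _
      have hu : 0 < 1 - Real.exp (-ξ) ^ 2 := by nlinarith
      have h0 : HasDerivAt (fun ξ : ℝ => Real.exp (-ξ)) (-Real.exp (-ξ)) ξ := by
        simpa using ((hasDerivAt_id ξ).neg).exp
      have h1 : HasDerivAt (fun ξ : ℝ => 1 - Real.exp (-ξ) ^ 2) (2 * Real.exp (-ξ) ^ 2) ξ := by
        have : HasDerivAt (fun ξ : ℝ => 1 - Real.exp (-ξ) ^ 2) _ ξ := (h0.pow 2).const_sub 1
        convert this using 1; ring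
      have h2 := h1.log (ne_of_gt hu)
      have h3 := ((h2.div_const 2).ofReal_comp).const_mul ((3:ℂ)+lam)
      have h4 : HasDerivAt (fun ξ : ℝ => lam * (ξ:ℂ)) lam ξ := by
        simpa using ((hasDerivAt_id ξ).ofReal_comp).const_mul lam
      have hH : HasDerivAt H (lam + ((3:ℂ)+lam) * (((2 * Real.exp (-ξ) ^ 2 / (1 - Real.exp (-ξ) ^ 2)) / 2 : ℝ) : ℂ)) ξ := by
        convert h4.add h3 using 1
        all_goals rfl
      have hD := (hderiv ξ (ne_of_gt hξ')).mul hH.cexp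
      have hzero : dv ξ * Complex.exp (H ξ) + v ξ * (Complex.exp (H ξ)
          * (lam + ((3:ℂ)+lam) * (((2 * Real.exp (-ξ) ^ 2 / (1 - Real.exp (-ξ) ^ 2)) / 2 : ℝ) : ℂ))) = 0 := by
        have heq' := heq ξ (ne_of_gt hξ')
        have huC : ((1 - Real.exp (-ξ) ^ 2 : ℝ) : ℂ) ≠ 0 := by exact_mod_cast ne_of_gt hu
        simp only [phi, phi', Real.sign_of_pos hξ', abs_of_pos hξ'] at heq'
        push_cast at heq' huC ⊢
        set q : ℂ := Complex.exp (-(ξ:ℂ)) with hqdef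
        set X := Complex.exp (H ξ)
        have hkey : (1 - q^2) * dv ξ = -(lam + 3*q^2) * v ξ := by linear_combination -heq'
        rw [show dv ξ * X + v ξ * (X * (lam + (3+lam) * (2 * q^2 / (1 - q^2) / 2)))
            = X * ((1-q^2) * dv ξ + v ξ * (lam * (1-q^2) + (3+lam) * q^2)) / (1-q^2) by
              field_simp]
        rw [hkey]
        field_simp
        ring
      rw [hzero] at hD
      exact hD
    have hconst : ∀ ξ ∈ Ioi (0:ℝ), v ξ * Complex.exp (H ξ) = v ξ₀ * Complex.exp (H ξ₀) :=
      fun ξ hξ => aux_const_on (convex_Ioi 0) hg0 hξ hpos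
    set K : ℝ := ‖v ξ₀ * Complex.exp (H ξ₀)‖ with hKdef
    have hK : 0 < K := norm_pos_iff.mpr (mul_ne_zero hv0 (Complex.exp_ne_zero _))
    set a : ℝ := min ξ₀ 1 with hadef
    have ha : 0 < a := lt_min hpos one_pos
    set c : ℝ := K * Real.exp (-lam.re) with hcdef
    have hc : 0 < c := by positivity
    have hlow : ∀ ξ ∈ Ioo (0:ℝ) a, (c^2/4) * ξ⁻¹ ≤ ‖v ξ‖ ^ (2:ℝ) := by
      intro ξ hξ
      obtain ⟨hξ0, hξa⟩ := hξ
      have hξ1 : ξ ≤ 1 := le_of_lt (lt_of_lt_of_le hξa (min_le_right _ _))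
      have hE : Real.exp (-ξ) < 1 := Real.exp_lt_one_iff.mpr (by linarith)
      have hEpos : 0 < Real.exp (-ξ) := Real.exp_pos _
      have hu : 0 < 1 - Real.exp (-ξ) ^ 2 := by nlinarith
      have hvξ : v ξ = (v ξ₀ * Complex.exp (H ξ₀)) * Complex.exp (-(H ξ)) := by
        have h := hconst ξ hξ0
        rw [← h, Complex.exp_neg, mul_assoc, mul_inv_cancel₀ (Complex.exp_ne_zero _), mul_one]
      have hnorm : ‖v ξ‖ = K * Real.exp (-(H ξ).re) := by
        rw [hvξ, norm_mul, Complex.norm_exp, Complex.neg_re]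
      have hre : (H ξ).re = lam.re * ξ + (3 + lam.re) * (Real.log (1 - Real.exp (-ξ) ^ 2) / 2) := by
        simp [hHdef, Complex.add_re, Complex.mul_re, Complex.ofReal_re, Complex.ofReal_im]
      have hlog : Real.log (1 - Real.exp (-ξ) ^ 2) ≤ 0 :=
        Real.log_nonpos (by positivity) (by nlinarith)
      -- u ≤ 2ξ
      have hu2 : 1 - Real.exp (-ξ) ^ 2 ≤ 2 * ξ := by
        have h1 : 1 - ξ ≤ Real.exp (-ξ) := by
          have := Real.add_one_le_exp (-ξ)
          linarith
        nlinarith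
      -- exp(-(H ξ).re) ≥ exp(-lam.re) * (1-exp(-ξ)²)⁻¹
      have hsplit : Real.exp (-(H ξ).re)
          = Real.exp (-(lam.re * ξ)) * Real.exp (-((3 + lam.re) * (Real.log (1 - Real.exp (-ξ) ^ 2) / 2))) := by
        rw [← Real.exp_add, hre]; ring_nf
      have hb1 : Real.exp (-lam.re) ≤ Real.exp (-(lam.re * ξ)) :=
        Real.exp_le_exp.mpr (by nlinarith)
      have hb2 : (1 - Real.exp (-ξ) ^ 2)⁻¹
          ≤ Real.exp (-((3 + lam.re) * (Real.log (1 - Real.exp (-ξ) ^ 2) / 2))) := by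
        have h1 : -Real.log (1 - Real.exp (-ξ) ^ 2)
            ≤ -((3 + lam.re) * (Real.log (1 - Real.exp (-ξ) ^ 2) / 2)) := by nlinarith
        have h2 := Real.exp_le_exp.mpr h1
        rwa [Real.exp_neg, Real.exp_log hu] at h2
      have hinv : (2 * ξ)⁻¹ ≤ (1 - Real.exp (-ξ) ^ 2)⁻¹ :=
        inv_anti₀ hu hu2
      have hvk : c * (2 * ξ)⁻¹ ≤ ‖v ξ‖ := by
        rw [hnorm, hsplit, hcdef]
        have hx : Real.exp (-lam.re) * (2*ξ)⁻¹
            ≤ Real.exp (-(lam.re * ξ)) * Real.exp (-((3 + lam.re) * (Real.log (1 - Real.exp (-ξ) ^ 2) / 2))) := by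
          apply mul_le_mul hb1 (le_trans hinv hb2) (by positivity) (by positivity)
        calc K * Real.exp (-lam.re) * (2*ξ)⁻¹
            = K * (Real.exp (-lam.re) * (2*ξ)⁻¹) := by ring
          _ ≤ K * (Real.exp (-(lam.re * ξ)) * Real.exp (-((3 + lam.re) * (Real.log (1 - Real.exp (-ξ) ^ 2) / 2)))) :=
              mul_le_mul_of_nonneg_left hx (le_of_lt hK)
      have hsq : (c * (2 * ξ)⁻¹)^2 ≤ ‖v ξ‖ ^ (2:ℝ) := by
        rw [show ((2:ℝ)) = ((2:ℕ):ℝ) by norm_num, Real.rpow_natCast]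
        exact pow_le_pow_left₀ (by positivity) hvk 2
      refine le_trans ?_ hsq
      rw [show (c * (2 * ξ)⁻¹)^2 = c^2/4 * (ξ^2)⁻¹ by field_simp; ring]
      apply mul_le_mul_of_nonneg_left _ (by positivity)
      apply inv_anti₀ (by positivity)
      nlinarith
    have hIntOn : IntegrableOn (fun x => ‖v x‖ ^ (2:ℝ)) (Ioo 0 a) volume := hInt.integrableOn
    have hInt' : IntegrableOn (fun x : ℝ => (c^2/4) * x⁻¹) (Ioo 0 a) volume := by
      apply hIntOn.mono' ((measurable_inv.const_mul _).aestronglyMeasurable)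
      rw [ae_restrict_iff' measurableSet_Ioo]
      filter_upwards with x hx
      have hx0 : 0 < x := hx.1
      rw [Real.norm_eq_abs, abs_of_nonneg (by positivity)]
      exact hlow x hx
    have hInt'' : IntegrableOn (fun x : ℝ => x ^ (-1:ℝ)) (Ioo 0 a) volume := by
      have h1 : IntegrableOn (fun x : ℝ => (c^2/4)⁻¹ * ((c^2/4) * x⁻¹)) (Ioo 0 a) volume :=
        hInt'.const_mul _
      apply h1.congr_fun _ measurableSet_Ioo
      intro x hx
      have hx0 : 0 < x := hx.1
      simp only
      rw [show ((-1:ℝ)) = ((-1 : ℤ):ℝ) by norm_num, Real.rpow_intCast, zpow_neg_one]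
      field_simp
    have := (intervalIntegral.integrableOn_Ioo_rpow_iff ha).mp hInt''
    norm_num at this
end

section
/- Let λ ∈ ℂ with Re(λ) > 2, φ(x) = e^{-|x|}, f ∈ L²(ℝ), and suppose v ∈ H¹_loc(ℝ∖{0}) ∩ L²(ℝ) with v(ξ) → 0 as ξ → ±∞ satisfies the resolvent equation (1-φ²)v' + φφ' v − λ v = f. Then (Re λ − 2) ‖v‖_{L²} ≤ ‖f‖_{L²}. -/
open MeasureTheory Real Set Filter

lemma phi_pos (x : ℝ) : 0 < phi x := Real.exp_pos _
lemma phi_le_one (x : ℝ) : phi x ≤ 1 := by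
  rw [phi, show (1:ℝ) = Real.exp 0 by simp]
  exact Real.exp_le_exp.mpr (by simp [abs_nonneg])

lemma phi_neg (x : ℝ) : phi (-x) = phi x := by rw [phi, phi, abs_neg]
lemma phi'_neg (x : ℝ) : phi' (-x) = -phi' x := by
  rw [phi', phi', abs_neg, Real.sign_neg]; ring

lemma sign_coe {x : ℝ} (hx : x ≠ 0) : (SignType.sign x : ℝ) = Real.sign x := by
  rcases hx.lt_or_gt with h | h
  · rw [Real.sign_of_neg h, sign_neg h]; simp
  · rw [Real.sign_of_pos h, sign_pos h]; simp

lemma abs_sign_le (x : ℝ) : |Real.sign x| ≤ 1 := by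
  rcases lt_trichotomy x 0 with h | h | h
  · rw [Real.sign_of_neg h]; norm_num
  · rw [h, Real.sign_zero]; norm_num
  · rw [Real.sign_of_pos h]; norm_num

lemma hasDerivAt_phi {x : ℝ} (hx : x ≠ 0) : HasDerivAt phi (phi' x) x := by
  have h1 : HasDerivAt (fun y : ℝ => -|y|) (-(SignType.sign x : ℝ)) x :=
    (hasDerivAt_abs hx).neg
  have h2 := h1.exp
  have h3 : HasDerivAt phi (Real.exp (-|x|) * -(SignType.sign x : ℝ)) x := h2
  convert h3 using 1
  rw [sign_coe hx, phi']; ring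

lemma abs_phiphi_le (x : ℝ) : |phi x * phi' x| ≤ 1 := by
  rw [abs_mul, phi, phi', abs_mul]
  have h1 : |Real.exp (-|x|)| ≤ 1 := by
    rw [abs_of_pos (Real.exp_pos _)]; exact phi_le_one x
  have h2 : |-Real.sign x| ≤ 1 := by rw [abs_neg]; exact abs_sign_le x
  nlinarith [abs_nonneg (Real.exp (-|x|)), abs_nonneg (-Real.sign x),
    mul_nonneg (abs_nonneg (-Real.sign x)) (abs_nonneg (Real.exp (-|x|)))]

lemma one_sub_phi_sq_nonneg (x : ℝ) : 0 ≤ 1 - phi x ^ 2 := by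
  nlinarith [phi_pos x, phi_le_one x]

lemma one_sub_phi_sq_le_one (x : ℝ) : 1 - phi x ^ 2 ≤ 1 := by
  nlinarith [phi_pos x]

lemma one_sub_phi_sq_le {x : ℝ} (hx : 0 < x) : 1 - phi x ^ 2 ≤ 2 * x := by
  have h1 : phi x ^ 2 = Real.exp (-(2*x)) := by
    rw [phi, abs_of_pos hx, ← Real.exp_nat_mul]
    ring_nf
  have h2 : 1 - 2*x ≤ Real.exp (-(2*x)) := by
    have := Real.add_one_le_exp (-(2*x)); linarith
  linarith

lemma key_side (G g E : ℝ → ℝ)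
    (hG : ∀ x : ℝ, 0 < x → HasDerivAt G (g x) x)
    (hgi : IntegrableOn g (Ioi 0) volume)
    (hGpos : ∀ x : ℝ, 0 < x → 0 ≤ G x)
    (hGtop : Tendsto G atTop (nhds 0))
    (hGE : ∀ x : ℝ, 0 < x → G x ≤ 2 * x * E x)
    (hEi : IntegrableOn E (Ioo 0 1) volume) :
    ∫ x in Ioi (0:ℝ), g x = 0 := by
  set gh : ℝ → ℝ := (Ioi (0:ℝ)).indicator g with hgh
  have hghint : Integrable gh volume := hgi.integrable_indicator measurableSet_Ioi
  set P : ℝ → ℝ := fun t => ∫ x in (0:ℝ)..t, gh x with hPdef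
  have hPcont : Continuous P := hghint.continuous_primitive 0
  have hfund : ∀ a b : ℝ, 0 < a → a ≤ b → G b - G a = P b - P a := by
    intro a b ha hab
    have h1 : (∫ x in a..b, gh x) = G b - G a := by
      apply intervalIntegral.integral_eq_sub_of_hasDerivAt
      · intro x hx
        rw [uIcc_of_le hab] at hx
        have hx0 : 0 < x := lt_of_lt_of_le ha hx.1
        have : gh x = g x := indicator_of_mem hx0 g
        rw [this]
        exact hG x hx0
      · exact hghint.intervalIntegrable
    have h2 : P a + (∫ x in a..b, gh x) = P b :=
      intervalIntegral.integral_add_adjacent_intervals hghint.intervalIntegrable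
        hghint.intervalIntegrable
    rw [h1] at h2; linarith
  set L : ℝ := G 1 - P 1 with hL
  have hGt : ∀ t : ℝ, 0 < t → G t = L + P t := by
    intro t ht
    rcases le_total t 1 with h | h
    · have := hfund t 1 ht h; simp only [hL]; linarith
    · have := hfund 1 t one_pos h; simp only [hL]; linarith
  have hP0 : P 0 = 0 := intervalIntegral.integral_same
  have h0 : Tendsto G (nhdsWithin 0 (Ioi 0)) (nhds L) := by
    have h1 : Tendsto (fun t => L + P t) (nhdsWithin 0 (Ioi 0)) (nhds (L + P 0)) :=
      ((continuous_const.add hPcont).tendsto 0).mono_left nhdsWithin_le_nhds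
    rw [hP0, add_zero] at h1
    refine h1.congr' ?_
    filter_upwards [self_mem_nhdsWithin] with t ht
    exact (hGt t ht).symm
  have hPlim : Tendsto P atTop (nhds (∫ x in Ioi (0:ℝ), gh x)) :=
    intervalIntegral_tendsto_integral_Ioi 0 hghint.integrableOn tendsto_id
  have hGlim2 : Tendsto G atTop (nhds (L + ∫ x in Ioi (0:ℝ), gh x)) := by
    have h1 : Tendsto (fun t => L + P t) atTop (nhds (L + ∫ x in Ioi (0:ℝ), gh x)) :=
      tendsto_const_nhds.add hPlim
    refine h1.congr' ?_
    filter_upwards [eventually_gt_atTop 0] with t ht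
    exact (hGt t ht).symm
  have hsum : L + (∫ x in Ioi (0:ℝ), gh x) = 0 := tendsto_nhds_unique hGlim2 hGtop
  have hghg : (∫ x in Ioi (0:ℝ), gh x) = ∫ x in Ioi (0:ℝ), g x := by
    refine setIntegral_congr_fun measurableSet_Ioi (fun x hx => ?_)
    exact indicator_of_mem hx g
  -- L ≥ 0
  have hLnonneg : 0 ≤ L := by
    refine ge_of_tendsto h0 ?_
    filter_upwards [self_mem_nhdsWithin] with t ht
    exact hGpos t ht
  -- L ≤ 0
  have hLnonpos : L ≤ 0 := by
    by_contra hc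
    push_neg at hc
    have hev : ∀ᶠ t in nhdsWithin 0 (Ioi 0), L / 2 < G t :=
      h0.eventually (eventually_gt_nhds (by linarith))
    rw [eventually_nhdsWithin_iff, Metric.eventually_nhds_iff] at hev
    obtain ⟨ε, hε, hball⟩ := hev
    set δ : ℝ := min ε 1 with hδdef
    have hδ : 0 < δ := lt_min hε one_pos
    have hbig : ∀ a ∈ Ioo (0:ℝ) δ, L / 4 * a⁻¹ ≤ E a := by
      intro a ha
      have ha0 : 0 < a := ha.1
      have haε : dist a 0 < ε := by
        rw [Real.dist_eq, sub_zero, abs_of_pos ha0]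
        exact lt_of_lt_of_le ha.2 (min_le_left _ _)
      have h1 : L / 2 < G a := hball haε ha0
      have h2 : G a ≤ 2 * a * E a := hGE a ha0
      have h3 : L / 2 ≤ 2 * a * E a := by linarith
      have h4 : L / 4 * a⁻¹ = L / (4 * a) := by field_simp
      rw [h4, div_le_iff₀ (by positivity)]
      linarith
    have hintinv : IntegrableOn (fun a : ℝ => L / 4 * a⁻¹) (Ioo 0 δ) := by
      apply Integrable.mono' (hEi.mono_set (Ioo_subset_Ioo le_rfl (min_le_right ε 1)))
      · exact (measurable_const.mul measurable_inv).aestronglyMeasurable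
      · rw [ae_restrict_iff' measurableSet_Ioo]
        filter_upwards with a ha
        rw [Real.norm_eq_abs, abs_of_nonneg (mul_nonneg (div_nonneg hc.le (by norm_num))
          (inv_nonneg.mpr ha.1.le))]
        exact hbig a ha
    have hinv : IntegrableOn (fun a : ℝ => a ^ (-1 : ℝ)) (Ioo 0 δ) := by
      have h5 := hintinv.const_mul (4 / L)
      refine (IntegrableOn.congr_fun h5 (fun x hx => ?_) measurableSet_Ioo)
      have hx0 : x ≠ 0 := ne_of_gt hx.1
      rw [Real.rpow_neg_one]
      field_simp
    have := (intervalIntegral.integrableOn_Ioo_rpow_iff hδ).mp hinv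
    linarith
  have : L = 0 := le_antisymm hLnonpos hLnonneg
  rw [hghg] at hsum
  linarith


/-- If `Re λ > 2` and `v` (differentiable off `0`, in `L²`, decaying at `±∞`) solves the
resolvent equation `(1-φ²)v' + φφ'v - λv = f` with `f ∈ L²`, then
`(Re λ - 2)‖v‖_{L²} ≤ ‖f‖_{L²}`. -/
theorem resolvent_bound
    (lam : ℂ) (hlam : 2 < lam.re) (f v dv : ℝ → ℂ)
    (hf : MeasureTheory.MemLp f 2 (volume : Measure ℝ))
    (hv : MeasureTheory.MemLp v 2 (volume : Measure ℝ))
    (hderiv : ∀ ξ : ℝ, ξ ≠ 0 → HasDerivAt v (dv ξ) ξ)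
    (htop : Filter.Tendsto v Filter.atTop (nhds 0))
    (hbot : Filter.Tendsto v Filter.atBot (nhds 0))
    (heq : ∀ ξ : ℝ, ξ ≠ 0 →
      ((1 - phi ξ ^ 2 : ℝ) : ℂ) * dv ξ + ((phi ξ * phi' ξ : ℝ) : ℂ) * v ξ - lam * v ξ = f ξ) :
    (lam.re - 2) * Real.sqrt (∫ x : ℝ, ‖v x‖ ^ 2) ≤ Real.sqrt (∫ x : ℝ, ‖f x‖ ^ 2) := by
  set E : ℝ → ℝ := fun x => ‖v x‖ ^ 2 with hEdef
  set F : ℝ → ℝ := fun x => (f x * (starRingEnd ℂ) (v x)).re with hFdef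
  set g : ℝ → ℝ := fun x => 2 * F x - 4 * (phi x * phi' x * E x) + 2 * lam.re * E x with hgdef
  set G : ℝ → ℝ := fun x => (1 - phi x ^ 2) * E x with hGdef
  have hEnn : ∀ x, 0 ≤ E x := fun x => sq_nonneg _
  -- integrability
  have hEint : Integrable E volume := (memLp_two_iff_integrable_sq_norm hv.1).mp hv
  have hfsq : Integrable (fun x => ‖f x‖ ^ 2) volume :=
    (memLp_two_iff_integrable_sq_norm hf.1).mp hf
  have hdom : Integrable (fun x => ‖f x‖ ^ 2 + ‖v x‖ ^ 2) volume := hfsq.add hEint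
  have hfvmeas : AEStronglyMeasurable (fun x => ‖f x‖ * ‖v x‖) volume :=
    hf.1.norm.mul hv.1.norm
  have hfvint : Integrable (fun x => ‖f x‖ * ‖v x‖) volume := by
    refine hdom.mono' hfvmeas (ae_of_all _ fun x => ?_)
    rw [Real.norm_eq_abs, abs_of_nonneg (mul_nonneg (norm_nonneg _) (norm_nonneg _))]
    nlinarith [sq_nonneg (‖f x‖ - ‖v x‖)]
  have hFmeas : AEStronglyMeasurable F volume := by
    apply Complex.continuous_re.comp_aestronglyMeasurable
    exact hf.1.mul (Complex.continuous_conj.comp_aestronglyMeasurable hv.1)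
  have hFabs : ∀ x, |F x| ≤ ‖f x‖ * ‖v x‖ := by
    intro x
    calc |F x| ≤ ‖f x * (starRingEnd ℂ) (v x)‖ := by
          exact Complex.abs_re_le_norm _
      _ = ‖f x‖ * ‖v x‖ := by rw [norm_mul, RCLike.norm_conj]
  have hFint : Integrable F volume := by
    refine hdom.mono' hFmeas (ae_of_all _ fun x => ?_)
    have h1 := hFabs x
    rw [Real.norm_eq_abs]
    nlinarith [sq_nonneg (‖f x‖ - ‖v x‖)]
  have hphim : Measurable phi := (Real.continuous_exp.comp continuous_abs.neg).measurable
  have hsgn : Measurable Real.sign := by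
    have h : Real.sign = fun r : ℝ => if r < 0 then (-1:ℝ) else if 0 < r then 1 else 0 :=
      funext fun r => rfl
    rw [h]
    exact Measurable.ite (measurableSet_lt measurable_id measurable_const) measurable_const
      (Measurable.ite (measurableSet_lt measurable_const measurable_id) measurable_const
        measurable_const)
  have hphiphimeas : AEStronglyMeasurable (fun x => phi x * phi' x) volume := by
    have : Measurable (fun x => phi x * phi' x) := by
      have : Measurable phi' := (hsgn.neg.mul hphim)
      exact hphim.mul this
    exact this.aestronglyMeasurable
  have hphiE : Integrable (fun x => phi x * phi' x * E x) volume := by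
    refine hEint.bdd_mul hphiphimeas (c := 1) (ae_of_all _ fun x => ?_)
    rw [Real.norm_eq_abs]; exact abs_phiphi_le x
  have hgint : Integrable g volume := by
    refine (((hFint.const_mul 2).sub (hphiE.const_mul 4)).add (hEint.const_mul (2 * lam.re)))
  -- derivative of G
  have hGderiv : ∀ x : ℝ, x ≠ 0 → HasDerivAt G (g x) x := by
    intro x hx
    have hvd := hderiv x hx
    have hconj : HasDerivAt (fun y => (starRingEnd ℂ) (v y)) ((starRingEnd ℂ) (dv x)) x := by
      exact Complex.conjCLE.hasFDerivAt.comp_hasDerivAt x hvd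
    have hmul := hvd.mul hconj
    have hre := Complex.reCLM.hasFDerivAt.comp_hasDerivAt x hmul
    have hE' : HasDerivAt E (2 * (dv x * (starRingEnd ℂ) (v x)).re) x := by
      have hfun : E = fun y => (v y * (starRingEnd ℂ) (v y)).re := by
        funext y
        simp [hEdef, Complex.mul_conj, Complex.normSq_eq_norm_sq,
          ← Complex.ofReal_pow]
      have hval : (dv x * (starRingEnd ℂ) (v x) + v x * (starRingEnd ℂ) (dv x)).re
          = 2 * (dv x * (starRingEnd ℂ) (v x)).re := by
        simp [Complex.add_re, Complex.mul_re, Complex.conj_re, Complex.conj_im]; ring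
      rw [hfun, ← hval]
      exact hre
    have hphisq : HasDerivAt (fun y => 1 - phi y ^ 2) (-(2 * (phi x * phi' x))) x := by
      have h := ((hasDerivAt_phi hx).pow 2).const_sub 1
      refine h.congr_deriv ?_
      push_cast; ring
    have hGd := hphisq.mul hE'
    have h2 : ((1 - phi x ^ 2 : ℝ) : ℂ) * dv x
        = f x - ((phi x * phi' x : ℝ) : ℂ) * v x + lam * v x := by
      linear_combination heq x hx
    have h3 : (1 - phi x ^ 2) * (dv x * (starRingEnd ℂ) (v x)).re
        = F x - phi x * phi' x * E x + lam.re * E x := by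
      have h4 := congrArg (fun z => (z * (starRingEnd ℂ) (v x)).re) h2
      simp only [sub_mul, add_mul] at h4
      have hEx : E x = (v x).re ^ 2 + (v x).im ^ 2 := by
        simp [hEdef, Complex.sq_norm, Complex.normSq_apply]; ring
      simp only [Complex.mul_re, Complex.sub_re, Complex.add_re, Complex.sub_im, Complex.add_im,
        Complex.mul_im, Complex.ofReal_re, Complex.ofReal_im, Complex.conj_re, Complex.conj_im,
        hFdef, hEx] at h4 ⊢
      ring_nf at h4 ⊢
      linarith [h4]
    refine hGd.congr_deriv ?_; symm
    have hg : g x = 2 * F x - 4 * (phi x * phi' x * E x) + 2 * lam.re * E x := rfl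
    rw [hg]
    linear_combination (-2) * h3
  -- limits of E at ±∞
  have hEtop : Tendsto E atTop (nhds 0) := by
    have h := htop.norm.pow 2
    simpa using h
  have hEbot : Tendsto E atBot (nhds 0) := by
    have h := hbot.norm.pow 2
    simpa using h
  -- positive side
  have hpos : ∫ x in Ioi (0:ℝ), g x = 0 := by
    apply key_side G g E
    · exact fun x hx => hGderiv x (ne_of_gt hx)
    · exact hgint.integrableOn
    · exact fun x _ => mul_nonneg (one_sub_phi_sq_nonneg x) (hEnn x)
    · apply tendsto_of_tendsto_of_tendsto_of_le_of_le tendsto_const_nhds hEtop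
      · exact fun x => mul_nonneg (one_sub_phi_sq_nonneg x) (hEnn x)
      · intro x
        have h1 := one_sub_phi_sq_le_one x
        have h2 := one_sub_phi_sq_nonneg x
        have h3 := hEnn x
        simp only [hGdef]
        nlinarith
    · exact fun x hx => mul_le_mul_of_nonneg_right (one_sub_phi_sq_le hx) (hEnn x)
    · exact hEint.integrableOn
  -- negative side
  have hneg : ∫ x in Iic (0:ℝ), g x = 0 := by
    have h := key_side (fun x => G (-x)) (fun x => -g (-x)) (fun x => E (-x))
      (by
        intro x hx
        have hd := hGderiv (-x) (neg_ne_zero.mpr (ne_of_gt hx))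
        have h := hd.comp x (hasDerivAt_neg x)
        have h' : HasDerivAt (G ∘ Neg.neg) (-g (-x)) x := by simpa [mul_comm] using h
        exact h')
      ((hgint.comp_neg).neg.integrableOn)
      (fun x _ => mul_nonneg (one_sub_phi_sq_nonneg _) (hEnn _))
      (by
        have hEbot' : Tendsto (fun x => E (-x)) atTop (nhds 0) :=
          hEbot.comp tendsto_neg_atTop_atBot
        apply tendsto_of_tendsto_of_tendsto_of_le_of_le tendsto_const_nhds hEbot'
        · exact fun x => mul_nonneg (one_sub_phi_sq_nonneg _) (hEnn _)
        · intro x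
          have h1 := one_sub_phi_sq_le_one (-x)
          have h2 := one_sub_phi_sq_nonneg (-x)
          have h3 := hEnn (-x)
          simp only [hGdef]
          nlinarith)
      (by
        intro x hx
        have hphe : G (-x) = (1 - phi x ^ 2) * E (-x) := by
          simp only [hGdef, phi_neg]
        show G (-x) ≤ 2 * x * E (-x)
        rw [hphe]
        exact mul_le_mul_of_nonneg_right (one_sub_phi_sq_le hx) (hEnn _))
      ((hEint.comp_neg).integrableOn)
    rw [integral_neg] at h
    have h2 : ∫ x in Ioi (0:ℝ), g (-x) = 0 := neg_eq_zero.mp h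
    rw [integral_comp_neg_Ioi (0:ℝ) g] at h2
    simpa using h2
  -- total integral is zero
  have htot : ∫ x, g x = 0 := by
    rw [← integral_add_compl measurableSet_Iic hgint, compl_Iic, hneg, hpos]
    norm_num
  -- split the integral
  have hsplit : ∫ x, g x = 2 * (∫ x, F x) - 4 * (∫ x, phi x * phi' x * E x)
      + 2 * lam.re * (∫ x, E x) := by
    have h1 : (∫ x, (2 * F x - 4 * (phi x * phi' x * E x) + 2 * lam.re * E x))
        = (∫ x, (2 * F x - 4 * (phi x * phi' x * E x))) + ∫ x, 2 * lam.re * E x :=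
      integral_add ((hFint.const_mul 2).sub (hphiE.const_mul 4)) (hEint.const_mul (2 * lam.re))
    have h2 : (∫ x, (2 * F x - 4 * (phi x * phi' x * E x)))
        = (∫ x, 2 * F x) - ∫ x, 4 * (phi x * phi' x * E x) :=
      integral_sub (hFint.const_mul 2) (hphiE.const_mul 4)
    show (∫ x, (2 * F x - 4 * (phi x * phi' x * E x) + 2 * lam.re * E x)) = _
    rw [h1, h2, integral_const_mul, integral_const_mul, integral_const_mul]
  have hIP : (∫ x, phi x * phi' x * E x) ≤ ∫ x, E x := by
    apply integral_mono hphiE hEint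
    intro x
    have h1 := abs_phiphi_le x
    have h2 := hEnn x
    show phi x * phi' x * E x ≤ E x
    nlinarith [le_abs_self (phi x * phi' x)]
  have hIF : -(∫ x, F x) ≤ ∫ x, ‖f x‖ * ‖v x‖ := by
    rw [← integral_neg]
    apply integral_mono hFint.neg hfvint
    intro x
    have := hFabs x
    have := neg_abs_le (F x)
    simp only [Pi.neg_apply]
    linarith
  -- Hölder
  have hpq : Real.HolderConjugate 2 2 := Real.holderConjugate_iff.mpr ⟨one_lt_two, by norm_num⟩
  have h2e : (ENNReal.ofReal 2) = (2 : ENNReal) := by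
    simp [ENNReal.ofReal_ofNat]
  have hholder := integral_mul_norm_le_Lp_mul_Lq hpq (h2e ▸ hf) (h2e ▸ hv)
  have hrpowf : (∫ a, ‖f a‖ ^ (2:ℝ)) = ∫ a, ‖f a‖ ^ 2 := by
    congr 1
    funext a
    rw [show (2:ℝ) = ((2:ℕ):ℝ) by norm_num, Real.rpow_natCast]
  have hrpowv : (∫ a, ‖v a‖ ^ (2:ℝ)) = ∫ a, ‖v a‖ ^ 2 := by
    congr 1
    funext a
    rw [show (2:ℝ) = ((2:ℕ):ℝ) by norm_num, Real.rpow_natCast]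
  rw [hrpowf, hrpowv] at hholder
  have hfvS : ∫ x, ‖f x‖ * ‖v x‖ ≤
      Real.sqrt (∫ x, ‖f x‖ ^ 2) * Real.sqrt (∫ x, E x) := by
    have hs1 : Real.sqrt (∫ x, ‖f x‖ ^ 2) = (∫ x, ‖f x‖ ^ 2) ^ ((1:ℝ)/2) :=
      Real.sqrt_eq_rpow _
    have hs2 : Real.sqrt (∫ x, E x) = (∫ x, ‖v x‖ ^ 2) ^ ((1:ℝ)/2) := by
      rw [hEdef]; exact Real.sqrt_eq_rpow _
    rw [hs1, hs2]
    convert hholder using 3 <;> norm_num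
  -- final algebra
  change (lam.re - 2) * Real.sqrt (∫ x, E x) ≤ Real.sqrt (∫ x, ‖f x‖ ^ 2)
  set S : ℝ := ∫ x, E x with hSdef
  set T : ℝ := ∫ x, ‖f x‖ ^ 2 with hTdef
  have hkey : (lam.re - 2) * S ≤ Real.sqrt T * Real.sqrt S := by
    have h1 : 2 * (∫ x, F x) - 4 * (∫ x, phi x * phi' x * E x) + 2 * lam.re * S = 0 := by
      rw [← hsplit]; exact htot
    have h2 : ∫ x, ‖f x‖ * ‖v x‖ ≤ Real.sqrt T * Real.sqrt S := hfvS
    nlinarith [hIF, hIP, h2]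
  have hS0 : 0 ≤ S := integral_nonneg hEnn
  rcases eq_or_lt_of_le (Real.sqrt_nonneg S) with h | h
  · rw [← h]
    simpa using Real.sqrt_nonneg T
  · have hSS : S = Real.sqrt S * Real.sqrt S := (Real.mul_self_sqrt hS0).symm
    rw [hSS] at hkey
    nlinarith [hkey, h]
end

section
/- For s > 0 and t ≥ 0, the function V(s,t) = v₀(s) / √(1 + (e^{2t} − 1)e^{-2s}) satisfies dV/dt = φ'(q)φ(q) V with V(s,0) = v₀(s), where q(s,t) = (1/2)ln(1 + (e^{2s}−1)e^{-2t}) and φ(x) = e^{-|x|}; for s < 0, V(s,t) = v₀(s)/√(1 + (e^{-2t} − 1)e^{2s}) satisfies the same ODE with q(s,t) = −(1/2)ln(1+(e^{-2s}−1)e^{2t}). -/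
open MeasureTheory Real Set Filter

/-- The characteristic curves of the linearized Novikov flow. -/
noncomputable def q (s t : ℝ) : ℝ :=
  if 0 < s then (1 / 2) * Real.log (1 + (Real.exp (2 * s) - 1) * Real.exp (-2 * t))
  else if s < 0 then -((1 / 2) * Real.log (1 + (Real.exp (-2 * s) - 1) * Real.exp (2 * t)))
  else 0

/-- The solution along characteristics for `s > 0`. -/
noncomputable def Vp (v0 : ℝ → ℝ) (s t : ℝ) : ℝ :=
  v0 s / Real.sqrt (1 + (Real.exp (2 * t) - 1) * Real.exp (-2 * s))

/-- The solution along characteristics for `s < 0`. -/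
noncomputable def Vm (v0 : ℝ → ℝ) (s t : ℝ) : ℝ :=
  v0 s / Real.sqrt (1 + (Real.exp (-2 * t) - 1) * Real.exp (2 * s))

lemma aux_alg (v X r a b : ℝ) (hX : 0 < X) (hr : 0 < r) (hab : X * (a * b) = r ^ 2) :
    -X⁻¹ * (v / r) = (0 * r - v * (b * 2 * a / (2 * r))) / r ^ 2 := by
  have hX' := hX.ne'
  have hr' := hr.ne'
  field_simp
  linear_combination v * hab

lemma aux_alg' (v X r a b : ℝ) (hX : 0 < X) (hr : 0 < r) (hab : X * (a * b) = r ^ 2) :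
    X⁻¹ * (v / r) = (0 * r - v * (b * -2 * a / (2 * r))) / r ^ 2 := by
  have hX' := hX.ne'
  have hr' := hr.ne'
  field_simp
  linear_combination (-v) * hab

/-- `V(s,t)` satisfies `dV/dt = φ'(q)φ(q)V` with `V(s,0) = v₀(s)`, for `s > 0`
and for `s < 0`. -/
theorem V_solves_ode_along_characteristics (v0 : ℝ → ℝ) :
    (∀ s : ℝ, 0 < s → Vp v0 s 0 = v0 s ∧ ∀ t : ℝ, 0 ≤ t →
      HasDerivAt (fun τ => Vp v0 s τ) (phi' (q s t) * phi (q s t) * Vp v0 s t) t)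
    ∧
    (∀ s : ℝ, s < 0 → Vm v0 s 0 = v0 s ∧ ∀ t : ℝ, 0 ≤ t →
      HasDerivAt (fun τ => Vm v0 s τ) (phi' (q s t) * phi (q s t) * Vm v0 s t) t) := by
  constructor
  · intro s hs
    refine ⟨by norm_num [Vp], fun t ht => ?_⟩
    have hApos : (0:ℝ) < Real.exp (-2 * s) := Real.exp_pos _
    have he : (1:ℝ) ≤ Real.exp (2 * t) := Real.one_le_exp (by linarith)
    have hD : 0 < 1 + (Real.exp (2 * t) - 1) * Real.exp (-2 * s) := by nlinarith
    have hsD : Real.sqrt (1 + (Real.exp (2 * t) - 1) * Real.exp (-2 * s)) ≠ 0 :=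
      (Real.sqrt_pos.mpr hD).ne'
    have hderivD : HasDerivAt (fun τ => 1 + (Real.exp (2 * τ) - 1) * Real.exp (-2 * s))
        (Real.exp (2 * t) * 2 * Real.exp (-2 * s)) t := by
      have h1 : HasDerivAt (fun τ : ℝ => 2 * τ) 2 t := by
        simpa using (hasDerivAt_id t).const_mul 2
      simpa using ((h1.exp.sub_const 1).mul_const (Real.exp (-2 * s))).const_add 1
    have hsqrt := hderivD.sqrt hD.ne'
    have hdiv := (hasDerivAt_const t (v0 s)).div hsqrt hsD
    simp only [Vp]
    convert hdiv using 1
    · rfl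
    · rfl
    · rfl
    have hq : q s t = (1 / 2) * Real.log (1 + (Real.exp (2 * s) - 1) * Real.exp (-2 * t)) := by
      simp [q, hs]
    have hes : (1:ℝ) < Real.exp (2 * s) := Real.one_lt_exp_iff.mpr (by linarith)
    have hX : (1:ℝ) < 1 + (Real.exp (2 * s) - 1) * Real.exp (-2 * t) := by
      nlinarith [Real.exp_pos (-2 * t)]
    have hqpos : 0 < q s t := by
      rw [hq]; have := Real.log_pos hX; linarith
    have key : phi' (q s t) * phi (q s t)
        = -(1 + (Real.exp (2 * s) - 1) * Real.exp (-2 * t))⁻¹ := by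
      rw [phi', phi, Real.sign_of_pos hqpos, abs_of_pos hqpos, neg_one_mul, neg_mul,
        ← Real.exp_add, hq]
      rw [show -(1 / 2 * Real.log (1 + (Real.exp (2 * s) - 1) * Real.exp (-2 * t)))
            + -(1 / 2 * Real.log (1 + (Real.exp (2 * s) - 1) * Real.exp (-2 * t)))
          = -Real.log (1 + (Real.exp (2 * s) - 1) * Real.exp (-2 * t)) by ring]
      rw [Real.exp_neg, Real.exp_log (by linarith)]
    have m1 : Real.exp (2 * s) * Real.exp (-2 * s) = 1 := by
      rw [← Real.exp_add]; norm_num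
    have m2 : Real.exp (-2 * t) * Real.exp (2 * t) = 1 := by
      rw [← Real.exp_add]; norm_num
    have hDX : (1 + (Real.exp (2 * s) - 1) * Real.exp (-2 * t))
        * (Real.exp (-2 * s) * Real.exp (2 * t))
        = 1 + (Real.exp (2 * t) - 1) * Real.exp (-2 * s) := by
      nlinarith [m1, m2]
    rw [key]
    have h2 : Real.sqrt (1 + (Real.exp (2 * t) - 1) * Real.exp (-2 * s)) ^ 2
        = 1 + (Real.exp (2 * t) - 1) * Real.exp (-2 * s) := Real.sq_sqrt hD.le
    exact aux_alg (v0 s) _ _ (Real.exp (-2 * s)) (Real.exp (2 * t)) (by linarith)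
      (Real.sqrt_pos.mpr hD) (by rw [h2]; exact hDX)
  · intro s hs
    refine ⟨by norm_num [Vm], fun t ht => ?_⟩
    have hApos : (0:ℝ) < Real.exp (2 * s) := Real.exp_pos _
    have hA1 : Real.exp (2 * s) < 1 := Real.exp_lt_one_iff.mpr (by linarith)
    have he : Real.exp (-2 * t) ≤ 1 := Real.exp_le_one_iff.mpr (by linarith)
    have he0 : (0:ℝ) < Real.exp (-2 * t) := Real.exp_pos _
    have hD : 0 < 1 + (Real.exp (-2 * t) - 1) * Real.exp (2 * s) := by nlinarith
    have hsD : Real.sqrt (1 + (Real.exp (-2 * t) - 1) * Real.exp (2 * s)) ≠ 0 :=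
      (Real.sqrt_pos.mpr hD).ne'
    have hderivD : HasDerivAt (fun τ => 1 + (Real.exp (-2 * τ) - 1) * Real.exp (2 * s))
        (Real.exp (-2 * t) * (-2) * Real.exp (2 * s)) t := by
      have h1 : HasDerivAt (fun τ : ℝ => -2 * τ) (-2) t := by
        simpa using (hasDerivAt_id t).const_mul (-2 : ℝ)
      simpa using ((h1.exp.sub_const 1).mul_const (Real.exp (2 * s))).const_add 1
    have hsqrt := hderivD.sqrt hD.ne'
    have hdiv := (hasDerivAt_const t (v0 s)).div hsqrt hsD
    simp only [Vm]
    convert hdiv using 1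
    · rfl
    · rfl
    · rfl
    have hq : q s t = -((1 / 2) * Real.log (1 + (Real.exp (-2 * s) - 1) * Real.exp (2 * t))) := by
      simp [q, hs, asymm hs]
    have hes : (1:ℝ) < Real.exp (-2 * s) := Real.one_lt_exp_iff.mpr (by linarith)
    have hX : (1:ℝ) < 1 + (Real.exp (-2 * s) - 1) * Real.exp (2 * t) := by
      nlinarith [Real.exp_pos (2 * t)]
    have hqneg : q s t < 0 := by
      rw [hq]; have := Real.log_pos hX; linarith
    have key : phi' (q s t) * phi (q s t)
        = (1 + (Real.exp (-2 * s) - 1) * Real.exp (2 * t))⁻¹ := by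
      rw [phi', phi, Real.sign_of_neg hqneg, abs_of_neg hqneg, neg_neg, neg_neg, one_mul,
        ← Real.exp_add, hq]
      rw [show -(1 / 2 * Real.log (1 + (Real.exp (-2 * s) - 1) * Real.exp (2 * t)))
            + -(1 / 2 * Real.log (1 + (Real.exp (-2 * s) - 1) * Real.exp (2 * t)))
          = -Real.log (1 + (Real.exp (-2 * s) - 1) * Real.exp (2 * t)) by ring]
      rw [Real.exp_neg, Real.exp_log (by linarith)]
    have m1 : Real.exp (-2 * s) * Real.exp (2 * s) = 1 := by
      rw [← Real.exp_add]; norm_num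
    have m2 : Real.exp (2 * t) * Real.exp (-2 * t) = 1 := by
      rw [← Real.exp_add]; norm_num
    have hDX : (1 + (Real.exp (-2 * s) - 1) * Real.exp (2 * t))
        * (Real.exp (2 * s) * Real.exp (-2 * t))
        = 1 + (Real.exp (-2 * t) - 1) * Real.exp (2 * s) := by
      nlinarith [m1, m2]
    rw [key]
    have h2 : Real.sqrt (1 + (Real.exp (-2 * t) - 1) * Real.exp (2 * s)) ^ 2
        = 1 + (Real.exp (-2 * t) - 1) * Real.exp (2 * s) := Real.sq_sqrt hD.le
    exact aux_alg' (v0 s) _ _ (Real.exp (2 * s)) (Real.exp (-2 * t)) (by linarith)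
      (Real.sqrt_pos.mpr hD) (by rw [h2]; exact hDX)
end
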